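/- A right R-module M has finite corank if and only if there exist hollow R-modules H₁, …, H_k and a surjective homomorphism φ : M → H₁ ⊕ ⋯ ⊕ H_k whose kernel is a small submodule of M. -/

import Mathlib

/-- `N` is a small (superfluous) submodule: `N ⊔ L = ⊤` implies `L = ⊤`. -/
def IsSmallSub (S : Type*) [Ring S] (Mod : Type*) [AddCommGroup Mod] [Module S Mod]
    (N : Submodule S Mod) : Prop :=
  ∀ L : Submodule S Mod, N ⊔ L = ⊤ → L = ⊤

/-- A hollow module: every proper submodule is small. -/
def IsHollowMod (S : Type*) [Ring S] (Mod : Type*) [AddCommGroup Mod] [Module S Mod] : Prop :=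
  ∀ N : Submodule S Mod, N ≠ ⊤ → IsSmallSub S Mod N

/-- The couniform dimension (corank) of a module: the supremum of `k` such
that `Mod` surjects onto a direct sum of `k` nonzero modules; equivalently
(splitting such a surjection into its component kernels `Lᵢ`), the supremum of
`k` such that there are proper submodules `L₁,…,L_k` with the canonical map
`Mod →ₗ ⊕ᵢ Mod⧸Lᵢ` surjective. `corank 0 = 0`. -/
noncomputable def corank (S : Type*) [Ring S] (Mod : Type*) [AddCommGroup Mod]
    [Module S Mod] : ℕ∞ :=
  sSup {c : ℕ∞ | ∃ k : ℕ, c = (k : ℕ∞) ∧ ∃ L : Fin k → Submodule S Mod,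
    (∀ i, L i ≠ ⊤) ∧
    Function.Surjective (LinearMap.pi (fun i => (L i).mkQ) : Mod →ₗ[S] ∀ i, Mod ⧸ L i)}

set_option linter.unusedSectionVars false

section LatticeDev
variable {α : Type*} [Lattice α] [IsModularLattice α] [OrderTop α] [DecidableEq α]

/-- A coindependent finset in a lattice with top. -/
def CoIndepSet (s : Finset α) : Prop :=
  ∀ x ∈ s, x ≠ ⊤ ∧ ((s.erase x).inf id ⊔ x = ⊤)

/-- `e` is co-essential in the interval `[a, ⊤]`. -/
def SmIn (a e : α) : Prop := ∀ c, a ≤ c → e ⊔ c = ⊤ → c = ⊤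

/-- The interval `[a, ⊤]` is hollow. -/
def CoUnif (a : α) : Prop := ∀ x y, a ≤ x → a ≤ y → x ≠ ⊤ → y ≠ ⊤ → x ⊔ y ≠ ⊤

theorem smIn_trans {w v u : α} (h1 : SmIn w v) (h2 : SmIn v u) : SmIn w u := by
  intro c hc hu
  have h3 : u ⊔ (v ⊔ c) = ⊤ := by
    rw [eq_top_iff, ← hu]
    exact sup_le le_sup_left (le_sup_of_le_right le_sup_right)
  exact h1 c hc (h2 (v ⊔ c) le_sup_left h3)

theorem smIn_anti {a e e' : α} (h : SmIn a e) (he : e' ≤ e) : SmIn a e' :=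
  fun c hc hu => h c hc (top_le_iff.1 (hu ▸ sup_le_sup_right he c))

/-- Dual of: if `x` is essential in `a` and `a ⊓ b = ⊥` then `x ⊔ b` is essential
in `a ⊔ b`. -/
theorem smIn_inf {a x b : α} (hax : a ≤ x) (h : SmIn a x) (hab : a ⊔ b = ⊤) :
    SmIn (a ⊓ b) (x ⊓ b) := by
  intro c hc htop
  -- (x ⊓ b) ⊔ (c ⊓ b) = b
  have h1 : (x ⊓ b) ⊔ (c ⊓ b) = b := by
    have := sup_inf_assoc_of_le (y := c) (z := b) (inf_le_right : x ⊓ b ≤ b)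
    rw [htop, top_inf_eq] at this
    exact this.symm
  set d := (c ⊓ b) ⊔ a with hd
  have h2 : x ⊔ d = ⊤ := by
    rw [eq_top_iff, ← hab]
    apply sup_le (le_sup_of_le_left hax)
    rw [← h1]
    exact sup_le (le_sup_of_le_left inf_le_left)
      (le_sup_of_le_right le_sup_left)
  have h3 : d = ⊤ := h d le_sup_right h2
  have h4 : d ⊓ b = c ⊓ b := by
    rw [hd, sup_inf_assoc_of_le (y := a) (z := b) (inf_le_right : c ⊓ b ≤ b)]
    exact sup_eq_left.2 (le_inf hc inf_le_right)
  have h5 : b ≤ c := by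
    have hb : b = c ⊓ b := by rw [← h4, h3, top_inf_eq]
    exact hb.le.trans inf_le_left
  rw [eq_top_iff, ← htop]
  exact sup_le (inf_le_right.trans h5) le_rfl

theorem coIndepSet_subset {s t : Finset α} (h : CoIndepSet s) (hts : t ⊆ s) :
    CoIndepSet t := by
  intro x hx
  obtain ⟨hne, hsup⟩ := h x (hts hx)
  refine ⟨hne, ?_⟩
  rw [eq_top_iff, ← hsup]
  exact sup_le_sup_right (Finset.inf_mono (Finset.erase_subset_erase x hts)) x

theorem coIndepSet_insert {s : Finset α} (h : CoIndepSet s) {d : α} (hd : d ≠ ⊤)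
    (hsup : s.inf id ⊔ d = ⊤) : d ∉ s ∧ CoIndepSet (insert d s) := by
  have hds : d ∉ s := by
    intro hmem
    have : (⊤ : α) ≤ d := by
      rw [← hsup]; exact sup_le (Finset.inf_le hmem) le_rfl
    exact hd (top_le_iff.1 this)
  refine ⟨hds, ?_⟩
  intro z hz
  rcases Finset.mem_insert.1 hz with rfl | hzs
  · exact ⟨hd, by rwa [Finset.erase_insert hds]⟩
  · obtain ⟨hne, hz2⟩ := h z hzs
    refine ⟨hne, ?_⟩
    have hzd : d ≠ z := fun he => hds (he ▸ hzs)
    have herase : (insert d s).erase z = insert d (s.erase z) :=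
      Finset.erase_insert_of_ne hzd
    rw [herase, Finset.inf_insert]
    set X := (s.erase z).inf id with hX
    -- s.inf id = z ⊓ X
    have hsinf : s.inf id = z ⊓ X := by
      conv_lhs => rw [← Finset.insert_erase hzs]
      rw [Finset.inf_insert]; rfl
    -- X = (X ⊓ d) ⊔ (z ⊓ X)
    have hmod : X ⊓ d ⊔ z ⊓ X = X ⊓ (d ⊔ z ⊓ X) :=
      inf_sup_assoc_of_le (y := d) (inf_le_right : z ⊓ X ≤ X)
    have hXd : X = X ⊓ d ⊔ z ⊓ X := by
      rw [hmod]
      have : d ⊔ z ⊓ X = ⊤ := by rw [sup_comm, ← hsinf]; exact hsup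
      rw [this, inf_top_eq]
    rw [eq_top_iff, ← hz2]
    refine sup_le ?_ le_sup_right
    calc X = X ⊓ d ⊔ z ⊓ X := hXd
    _ ≤ id d ⊓ X ⊔ z := by
        exact sup_le (le_sup_of_le_left (le_inf inf_le_right inf_le_left))
          (le_sup_of_le_right inf_le_left)

theorem slot_aux {X a x y : α} (haX : X ⊔ a = ⊤) (hax : a ≤ x) (hay : a ≤ y)
    (hxy : x ⊔ y = ⊤) : y ⊓ X ⊔ x = ⊤ := by
  have hmody : (a ⊔ X) ⊓ y = a ⊔ X ⊓ y := sup_inf_assoc_of_le (y := X) hay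
  have hyeq : y = a ⊔ X ⊓ y := by
    rw [← hmody, sup_comm a X, haX, top_inf_eq]
  rw [eq_top_iff, ← hxy]
  refine sup_le le_sup_right ?_
  calc y = a ⊔ X ⊓ y := hyeq
  _ ≤ y ⊓ X ⊔ x := sup_le (le_sup_of_le_right hax)
      (le_sup_of_le_left (le_inf inf_le_right inf_le_left))

theorem coIndepSet_split {s : Finset α} (h : CoIndepSet s) {a x y : α} (ha : a ∈ s)
    (hax : a ≤ x) (hay : a ≤ y) (hx : x ≠ ⊤) (hy : y ≠ ⊤) (hxy : x ⊔ y = ⊤) :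
    CoIndepSet (insert x (insert y (s.erase a))) ∧
      (insert x (insert y (s.erase a))).card = s.card + 1 := by
  have hxyne : x ≠ y := fun he => hx (by subst he; rwa [sup_idem] at hxy)
  have hnm : ∀ z, a ≤ z → z ≠ ⊤ → z ∉ s.erase a := by
    intro z haz hz hmem
    obtain ⟨hzne, hzsup⟩ := h z (Finset.mem_of_mem_erase hmem)
    have hzna : z ≠ a := Finset.ne_of_mem_erase hmem
    have hmem2 : a ∈ s.erase z := Finset.mem_erase.2 ⟨fun he => hzna he.symm, ha⟩
    have : (⊤ : α) ≤ z := by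
      rw [← hzsup]
      exact sup_le ((Finset.inf_le hmem2).trans haz) le_rfl
    exact hz (top_le_iff.1 this)
  have hxs : x ∉ s.erase a := hnm x hax hx
  have hys : y ∉ s.erase a := hnm y hay hy
  have hxins : x ∉ insert y (s.erase a) := by
    rw [Finset.mem_insert]; rintro (rfl | hc); exacts [hxyne rfl, hxs hc]
  have haX : (s.erase a).inf id ⊔ a = ⊤ := (h a ha).2
  constructor
  · intro z hz
    rcases Finset.mem_insert.1 hz with rfl | hz'
    · refine ⟨hx, ?_⟩
      rw [Finset.erase_insert hxins, Finset.inf_insert]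
      simpa using slot_aux haX hax hay hxy
    rcases Finset.mem_insert.1 hz' with rfl | hz''
    · refine ⟨hy, ?_⟩
      rw [Finset.erase_insert_of_ne hxyne, Finset.erase_insert hys, Finset.inf_insert]
      simpa using slot_aux haX hay hax (by rwa [sup_comm])
    · obtain ⟨hbne, hbsup⟩ := h z (Finset.mem_of_mem_erase hz'')
      refine ⟨hbne, ?_⟩
      have hzx : x ≠ z := fun he => hxs (he ▸ hz'')
      have hzy : y ≠ z := fun he => hys (he ▸ hz'')
      have hzna : z ≠ a := Finset.ne_of_mem_erase hz''
      rw [Finset.erase_insert_of_ne hzx, Finset.erase_insert_of_ne hzy,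
        Finset.inf_insert, Finset.inf_insert]
      rw [eq_top_iff, ← hbsup]
      refine sup_le ?_ le_sup_right
      refine le_sup_of_le_left (le_inf ?_ (le_inf ?_ ?_))
      · exact le_trans (Finset.inf_le (Finset.mem_erase.2 ⟨fun he => hzna he.symm, ha⟩)) hax
      · exact le_trans (Finset.inf_le (Finset.mem_erase.2 ⟨fun he => hzna he.symm, ha⟩)) hay
      · exact Finset.inf_mono (Finset.erase_subset_erase z (Finset.erase_subset a s))
  · have h1 : 1 ≤ s.card := Finset.card_pos.2 ⟨a, ha⟩
    rw [Finset.card_insert_of_notMem hxins, Finset.card_insert_of_notMem hys,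
      Finset.card_erase_of_mem ha]
    omega

theorem smIn_inf_family : ∀ s : Finset α, CoIndepSet s →
    ∀ x : α → α, (∀ a ∈ s, a ≤ x a ∧ SmIn a (x a)) → SmIn (s.inf id) (s.inf x) := by
  intro s
  induction s using Finset.induction_on with
  | empty =>
    intro _ x _
    rw [Finset.inf_empty, Finset.inf_empty]
    intro c hc _
    exact top_le_iff.1 hc
  | insert a s ha ih =>
    intro hins x hx
    have hs : CoIndepSet s := coIndepSet_subset hins (Finset.subset_insert a s)
    have hcod : s.inf id ⊔ a = ⊤ := by
      have := (hins a (Finset.mem_insert_self a s)).2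
      rwa [Finset.erase_insert ha] at this
    obtain ⟨haxa, hsm⟩ := hx a (Finset.mem_insert_self a s)
    have hxs : ∀ b ∈ s, b ≤ x b ∧ SmIn b (x b) := fun b hb =>
      hx b (Finset.mem_insert_of_mem hb)
    have ihs := ih hs x hxs
    have A1 : SmIn (a ⊓ s.inf id) (x a ⊓ s.inf id) :=
      smIn_inf haxa hsm (by rwa [sup_comm])
    have hinf_le : s.inf id ≤ s.inf x :=
      Finset.le_inf fun b hb => (Finset.inf_le hb).trans (hxs b hb).1
    have hcod2 : s.inf id ⊔ x a = ⊤ := by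
      rw [eq_top_iff, ← hcod]
      exact sup_le le_sup_left (le_sup_of_le_right haxa)
    have A2 : SmIn (s.inf id ⊓ x a) (s.inf x ⊓ x a) := smIn_inf hinf_le ihs hcod2
    rw [inf_comm (s.inf id) (x a), inf_comm (s.inf x) (x a)] at A2
    have := smIn_trans A1 A2
    rw [Finset.inf_insert, Finset.inf_insert]
    simpa using this

theorem exchange {s : Finset α} (hs : CoIndepSet s) (hu : ∀ a ∈ s, CoUnif a)
    (hsm : ∀ c, s.inf id ⊔ c = ⊤ → c = ⊤) {F : Finset α} (hF : CoIndepSet F)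
    {b : α} (hb : b ∈ F) : ∃ a ∈ s, (F.erase b).inf id ⊔ a = ⊤ := by
  by_contra hno
  push_neg at hno
  set B := (F.erase b).inf id with hB
  obtain ⟨hbne, hbB⟩ := hF b hb
  have hx : ∀ a ∈ s, a ≤ a ⊔ B ∧ SmIn a (a ⊔ B) := by
    intro a ha
    refine ⟨le_sup_left, ?_⟩
    intro c hc htop
    by_contra hcne
    refine hu a ha (a ⊔ B) c le_sup_left hc ?_ hcne ?_
    · intro he
      exact hno a ha (by rwa [sup_comm] at he)
    · exact htop
  have key := smIn_inf_family s hs (fun a => a ⊔ B) hx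
  -- unconditional smallness of T := s.inf (· ⊔ B)
  have hT : ∀ c, s.inf (fun a => a ⊔ B) ⊔ c = ⊤ → c = ⊤ := by
    intro c htop
    have h1 : s.inf (fun a => a ⊔ B) ⊔ (s.inf id ⊔ c) = ⊤ := by
      rw [eq_top_iff, ← htop]
      exact sup_le le_sup_left (le_sup_of_le_right le_sup_right)
    have h2 := key (s.inf id ⊔ c) le_sup_left h1
    exact hsm c h2
  have hBle : B ≤ s.inf (fun a => a ⊔ B) := Finset.le_inf fun a _ => le_sup_right
  have : s.inf (fun a => a ⊔ B) ⊔ b = ⊤ := by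
    rw [eq_top_iff, ← hbB]
    exact sup_le (le_sup_of_le_left hBle) le_sup_right
  exact hbne (hT b this)

theorem coIndepSet_card_le {s : Finset α} (hs : CoIndepSet s) (hu : ∀ a ∈ s, CoUnif a)
    (hsm : ∀ c, s.inf id ⊔ c = ⊤ → c = ⊤) {t : Finset α} (ht : CoIndepSet t) :
    t.card ≤ s.card := by
  suffices H : ∀ n (u r : Finset α), u ⊆ s → Disjoint u r → CoIndepSet (u ∪ r) →
      r.card = n → u.card + r.card ≤ s.card by
    have := H t.card ∅ t (Finset.empty_subset s) (Finset.disjoint_empty_left t)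
      (by rwa [Finset.empty_union]) rfl
    simpa using this
  intro n
  induction n with
  | zero =>
    intro u r hus _ _ hr
    rw [Finset.card_eq_zero] at hr; subst hr
    simpa using Finset.card_le_card hus
  | succ n ih =>
    intro u r hus hdisj hcoind hr
    have hrne : r.Nonempty := by rw [← Finset.card_pos, hr]; omega
    obtain ⟨b, hbr⟩ := hrne
    have hbF : b ∈ u ∪ r := Finset.mem_union_right u hbr
    obtain ⟨a, has, hexch⟩ := exchange hs hu hsm hcoind hbF
    have hane : a ≠ ⊤ := (hs a has).1
    have hFb : CoIndepSet ((u ∪ r).erase b) :=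
      coIndepSet_subset hcoind (Finset.erase_subset _ _)
    obtain ⟨haF, hins⟩ := coIndepSet_insert hFb hane hexch
    have hbu : b ∉ u := fun hbu => Finset.disjoint_left.1 hdisj hbu hbr
    have he1 : (u ∪ r).erase b = u ∪ r.erase b := by
      rw [Finset.erase_union_distrib, Finset.erase_eq_of_notMem hbu]
    have he2 : insert a ((u ∪ r).erase b) = insert a u ∪ r.erase b := by
      rw [he1, Finset.insert_union]
    have hau : a ∉ u := fun hh => haF (he1 ▸ Finset.mem_union_left _ hh)
    have har' : a ∉ r.erase b := fun hh => haF (he1 ▸ Finset.mem_union_right _ hh)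
    have hdisj' : Disjoint (insert a u) (r.erase b) := by
      rw [Finset.disjoint_left]
      intro z hz hzr
      rcases Finset.mem_insert.1 hz with rfl | hzu
      · exact har' hzr
      · exact Finset.disjoint_left.1 hdisj hzu (Finset.mem_of_mem_erase hzr)
    have hrec := ih (insert a u) (r.erase b) (Finset.insert_subset has hus) hdisj'
      (he2 ▸ hins) (by rw [Finset.card_erase_of_mem hbr, hr]; omega)
    rw [Finset.card_insert_of_notMem hau, Finset.card_erase_of_mem hbr, hr] at hrec
    omega

/-- Fin-indexed coindependent family. -/
def CoIndepF {k : ℕ} (L : Fin k → α) : Prop :=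
  ∀ i, L i ≠ ⊤ ∧ ((Finset.univ.erase i).inf L ⊔ L i = ⊤)

theorem coIndepF_injective {k : ℕ} {L : Fin k → α} (h : CoIndepF L) :
    Function.Injective L := by
  intro i j hij
  by_contra hne
  obtain ⟨hne', hsup⟩ := h i
  have hj : j ∈ Finset.univ.erase i :=
    Finset.mem_erase.2 ⟨fun he => hne he.symm, Finset.mem_univ j⟩
  have : (⊤ : α) ≤ L i := by
    rw [← hsup]; exact sup_le ((Finset.inf_le hj).trans hij.ge) le_rfl
  exact hne' (top_le_iff.1 this)

theorem coIndepF_toSet {k : ℕ} {L : Fin k → α} (h : CoIndepF L) :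
    CoIndepSet (Finset.univ.image L) ∧ (Finset.univ.image L).card = k := by
  have hinj := coIndepF_injective h
  constructor
  · intro x hx
    obtain ⟨i, -, rfl⟩ := Finset.mem_image.1 hx
    refine ⟨(h i).1, ?_⟩
    rw [← Finset.image_erase hinj, Finset.inf_image]
    simpa using (h i).2
  · rw [Finset.card_image_of_injective _ hinj, Finset.card_univ, Fintype.card_fin]

theorem coIndepSet_toF {s : Finset α} (h : CoIndepSet s) :
    ∃ L : Fin s.card → α, CoIndepF L := by
  refine ⟨fun i => ((s.equivFin.symm i : s) : α), ?_⟩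
  have hinj : Function.Injective (fun i => ((s.equivFin.symm i : s) : α)) :=
    fun i j hij => s.equivFin.symm.injective (Subtype.ext hij)
  intro i
  have hmem : ((s.equivFin.symm i : s) : α) ∈ s := (s.equivFin.symm i).2
  obtain ⟨hne, hsup⟩ := h _ hmem
  refine ⟨hne, ?_⟩
  have himg : Finset.univ.image (fun i => ((s.equivFin.symm i : s) : α)) = s := by
    ext x
    simp only [Finset.mem_image, Finset.mem_univ, true_and]
    constructor
    · rintro ⟨j, rfl⟩; exact (s.equivFin.symm j).2
    · intro hx; exact ⟨s.equivFin ⟨x, hx⟩, by simp⟩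
  have hkey : (Finset.univ.erase i).inf (fun j => ((s.equivFin.symm j : s) : α))
      = (s.erase ((s.equivFin.symm i : s) : α)).inf id := by
    calc (Finset.univ.erase i).inf (fun j => ((s.equivFin.symm j : s) : α))
        = ((Finset.univ.erase i).image (fun j => ((s.equivFin.symm j : s) : α))).inf id := by
          rw [Finset.inf_image]; rfl
      _ = ((Finset.univ.image (fun j => ((s.equivFin.symm j : s) : α))).erase
            ((s.equivFin.symm i : s) : α)).inf id := by
          rw [Finset.image_erase hinj]
      _ = (s.erase ((s.equivFin.symm i : s) : α)).inf id := by rw [himg]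
  rw [hkey]
  exact hsup

end LatticeDev

section ModuleDev
variable {S : Type*} [Ring S] {Mod : Type*} [AddCommGroup Mod] [Module S Mod]

theorem surj_pi_iff {k : ℕ} (L : Fin k → Submodule S Mod) :
    Function.Surjective (LinearMap.pi (fun i => (L i).mkQ) : Mod →ₗ[S] ∀ i, Mod ⧸ L i) ↔
      ∀ i, (Finset.univ.erase i).inf L ⊔ L i = ⊤ := by
  constructor
  · intro hsurj i
    rw [eq_top_iff]
    rintro x -
    obtain ⟨y, hy⟩ := hsurj (Pi.single i (Submodule.Quotient.mk x))
    have hyi : (Submodule.Quotient.mk y : Mod ⧸ L i) = Submodule.Quotient.mk x := by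
      have := congrFun hy i
      simpa [LinearMap.pi_apply, Submodule.mkQ_apply] using this
    have hymem : y ∈ (Finset.univ.erase i).inf L := by
      rw [Submodule.mem_finsetInf]
      intro j hj
      have hji : j ≠ i := Finset.ne_of_mem_erase hj
      have hj0 := congrFun hy j
      simp only [LinearMap.pi_apply, Submodule.mkQ_apply, Pi.single_eq_of_ne hji] at hj0
      rwa [Submodule.Quotient.mk_eq_zero] at hj0
    have hxmem : x - y ∈ L i := (Submodule.Quotient.eq (L i)).1 hyi.symm
    exact Submodule.mem_sup.2 ⟨y, hymem, x - y, hxmem, by abel⟩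
  · intro hco g
    choose xv hxv using fun i => Submodule.Quotient.mk_surjective (L i) (g i)
    have hdec : ∀ i, ∃ v ∈ (Finset.univ.erase i).inf L, ∃ u ∈ L i, v + u = xv i := by
      intro i
      have : xv i ∈ (Finset.univ.erase i).inf L ⊔ L i := by rw [hco i]; trivial
      exact Submodule.mem_sup.1 this
    choose v hv u hu huv using hdec
    refine ⟨∑ j, v j, ?_⟩
    funext i
    rw [LinearMap.pi_apply, Submodule.mkQ_apply]
    have hmk : (Submodule.Quotient.mk (∑ j, v j) : Mod ⧸ L i)
        = Submodule.Quotient.mk (v i) := by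
      rw [Submodule.Quotient.eq]
      have hsub : (∑ j, v j) - v i = ∑ j ∈ Finset.univ.erase i, v j :=
        (Finset.sum_erase_eq_sub (Finset.mem_univ i)).symm
      rw [hsub]
      refine Submodule.sum_mem _ ?_
      intro j hj
      have hji : j ≠ i := Finset.ne_of_mem_erase hj
      have : i ∈ Finset.univ.erase j :=
        Finset.mem_erase.2 ⟨fun he => hji he.symm, Finset.mem_univ i⟩
      exact Submodule.mem_finsetInf.1 (hv j) i this
    rw [hmk]
    have hvi : v i = xv i - u i := eq_sub_of_add_eq (huv i)
    rw [hvi, Submodule.Quotient.mk_sub, (Submodule.Quotient.mk_eq_zero _).2 (hu i),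
      sub_zero, hxv i]

theorem ker_pi_eq {k : ℕ} (L : Fin k → Submodule S Mod) :
    LinearMap.ker (LinearMap.pi (fun i => (L i).mkQ) : Mod →ₗ[S] ∀ i, Mod ⧸ L i)
      = Finset.univ.inf L := by
  rw [LinearMap.ker_pi]
  simp [Submodule.ker_mkQ, Finset.inf_eq_iInf]

set_option maxHeartbeats 2000000 in
theorem hollow_iff_coUnif (L : Submodule S Mod) :
    IsHollowMod S (Mod ⧸ L) ↔ CoUnif L := by
  constructor
  · intro h x y hLx hLy hx hy hxy
    have hmapx : Submodule.map L.mkQ x ≠ ⊤ := by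
      intro he
      have h2 := congrArg (Submodule.comap L.mkQ) he
      rw [Submodule.comap_map_eq, Submodule.ker_mkQ, Submodule.comap_top,
        sup_eq_left.2 hLx] at h2
      exact hx h2
    have hsup : Submodule.map L.mkQ x ⊔ Submodule.map L.mkQ y = ⊤ := by
      rw [← Submodule.map_sup, hxy, Submodule.map_top, Submodule.range_mkQ]
    have hy' := h _ hmapx _ hsup
    have h2 := congrArg (Submodule.comap L.mkQ) hy'
    rw [Submodule.comap_map_eq, Submodule.ker_mkQ, Submodule.comap_top,
      sup_eq_left.2 hLy] at h2
    exact hy h2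
  · intro h N hN N' hsup
    by_contra hN'
    have hNmap : Submodule.map L.mkQ (Submodule.comap L.mkQ N) = N := by
      rw [Submodule.map_comap_eq, Submodule.range_mkQ, top_inf_eq]
    have hNmap' : Submodule.map L.mkQ (Submodule.comap L.mkQ N') = N' := by
      rw [Submodule.map_comap_eq, Submodule.range_mkQ, top_inf_eq]
    have hLA : L ≤ Submodule.comap L.mkQ N := by
      intro z hz
      show L.mkQ z ∈ N
      rw [Submodule.mkQ_apply, (Submodule.Quotient.mk_eq_zero L).2 hz]
      exact N.zero_mem
    have hLB : L ≤ Submodule.comap L.mkQ N' := by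
      intro z hz
      show L.mkQ z ∈ N'
      rw [Submodule.mkQ_apply, (Submodule.Quotient.mk_eq_zero L).2 hz]
      exact N'.zero_mem
    have hA : Submodule.comap L.mkQ N ≠ ⊤ := by
      intro he
      rw [← hNmap, he, Submodule.map_top, Submodule.range_mkQ] at hN
      exact hN rfl
    have hB : Submodule.comap L.mkQ N' ≠ ⊤ := by
      intro he
      rw [← hNmap', he, Submodule.map_top, Submodule.range_mkQ] at hN'
      exact hN' rfl
    have hAB : Submodule.comap L.mkQ N ⊔ Submodule.comap L.mkQ N' = ⊤ := by
      have hm : Submodule.map L.mkQ (Submodule.comap L.mkQ N ⊔ Submodule.comap L.mkQ N')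
          = ⊤ := by
        rw [Submodule.map_sup, hNmap, hNmap', hsup]
      have h2 := congrArg (Submodule.comap L.mkQ) hm
      rw [Submodule.comap_map_eq, Submodule.ker_mkQ, Submodule.comap_top] at h2
      rw [← h2]
      exact (sup_eq_left.2 (le_trans hLA le_sup_left)).symm
    exact h _ _ hLA hLB hA hB hAB
end ModuleDev

/-- `corank M < ∞` iff there are hollow modules `H₁,…,H_k` and a surjection
`φ : M → H₁ ⊕ ⋯ ⊕ H_k` with small kernel (the `Hᵢ` may be realized as
quotients `M⧸Lᵢ` and `φ` as the canonical map). -/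
theorem stmt13 (S : Type*) [Ring S] (Mod : Type*) [AddCommGroup Mod] [Module S Mod] :
    corank S Mod < ⊤ ↔
      ∃ (k : ℕ) (L : Fin k → Submodule S Mod),
        (∀ i, IsHollowMod S (Mod ⧸ L i)) ∧
        Function.Surjective
          (LinearMap.pi (fun i => (L i).mkQ) : Mod →ₗ[S] ∀ i, Mod ⧸ L i) ∧
        IsSmallSub S Mod
          (LinearMap.ker (LinearMap.pi (fun i => (L i).mkQ) : Mod →ₗ[S] ∀ i, Mod ⧸ L i)) := by
  classical
  constructor
  · intro h
    set n := (corank S Mod).toNat with hn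
    have hcast : (n : ℕ∞) = corank S Mod := ENat.coe_toNat h.ne
    set P : ℕ → Prop := fun k => ∃ L : Fin k → Submodule S Mod, CoIndepF L with hP
    have hP0 : P 0 := ⟨Fin.elim0, fun i => i.elim0⟩
    have hPbound : ∀ k, P k → k ≤ n := by
      rintro k ⟨L, hL⟩
      have hmem : (k : ℕ∞) ∈ {c : ℕ∞ | ∃ k : ℕ, c = (k : ℕ∞) ∧
          ∃ L : Fin k → Submodule S Mod, (∀ i, L i ≠ ⊤) ∧ Function.Surjective
            (LinearMap.pi (fun i => (L i).mkQ) : Mod →ₗ[S] ∀ i, Mod ⧸ L i)} :=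
        ⟨k, rfl, L, fun i => (hL i).1, (surj_pi_iff L).2 (fun i => (hL i).2)⟩
      have hle : (k : ℕ∞) ≤ corank S Mod := le_sSup hmem
      rw [← hcast] at hle
      exact_mod_cast hle
    set k0 := Nat.findGreatest P n with hk0
    have hPk0 : P k0 := Nat.findGreatest_spec (Nat.zero_le n) hP0
    have hnot : ¬ P (k0 + 1) := by
      intro hp
      have h1 : k0 + 1 ≤ k0 := Nat.le_findGreatest (hPbound _ hp) hp
      omega
    obtain ⟨L, hL⟩ := hPk0
    obtain ⟨hset, hcard⟩ := coIndepF_toSet hL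
    set s := Finset.univ.image L with hs
    have hinfeq : Finset.univ.inf L = s.inf id := by
      rw [hs, Finset.inf_image]; rfl
    have hcu : ∀ i, CoUnif (L i) := by
      intro i
      unfold CoUnif
      by_contra hcu
      push_neg at hcu
      obtain ⟨x, y, hLx, hLy, hx, hy, hxy⟩ := hcu
      have hmem : L i ∈ s := Finset.mem_image_of_mem L (Finset.mem_univ i)
      obtain ⟨hsp, hc⟩ := coIndepSet_split hset hmem hLx hLy hx hy hxy
      obtain ⟨L', hL'⟩ := coIndepSet_toF hsp
      have hc2 : (insert x (insert y (s.erase (L i)))).card = k0 + 1 := by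
        rw [hc, hcard]
      exact hnot (hc2 ▸ ⟨L', hL'⟩)
    have hsm : ∀ c : Submodule S Mod, s.inf id ⊔ c = ⊤ → c = ⊤ := by
      intro c hcc
      by_contra hcne
      obtain ⟨hnm, hins⟩ := coIndepSet_insert hset hcne hcc
      obtain ⟨L', hL'⟩ := coIndepSet_toF hins
      have hc2 : (insert c s).card = k0 + 1 := by
        rw [Finset.card_insert_of_notMem hnm, hcard]
      exact hnot (hc2 ▸ ⟨L', hL'⟩)
    refine ⟨k0, L, ?_, ?_, ?_⟩
    · exact fun i => (hollow_iff_coUnif (L i)).2 (hcu i)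
    · exact (surj_pi_iff L).2 fun i => (hL i).2
    · intro c hcc
      apply hsm c
      rwa [ker_pi_eq, hinfeq] at hcc
  · rintro ⟨k, L, hhol, hsurj, hker⟩
    have hco := (surj_pi_iff L).1 hsurj
    have hcu : ∀ i, CoUnif (L i) := fun i => (hollow_iff_coUnif (L i)).1 (hhol i)
    set s := (Finset.univ.image L).filter (fun x => x ≠ ⊤) with hs
    have hmem_s : ∀ {x : Submodule S Mod}, x ∈ s ↔ ((∃ i, L i = x) ∧ x ≠ ⊤) := by
      intro x
      rw [hs, Finset.mem_filter, Finset.mem_image]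
      simp
    have hset : CoIndepSet s := by
      intro x hx
      obtain ⟨⟨i, rfl⟩, hxne⟩ := hmem_s.1 hx
      refine ⟨hxne, ?_⟩
      rw [eq_top_iff, ← hco i]
      refine sup_le_sup_right ?_ _
      refine Finset.le_inf ?_
      intro y hy
      obtain ⟨hyne, hys⟩ := Finset.mem_erase.1 hy
      obtain ⟨⟨j, rfl⟩, -⟩ := hmem_s.1 hys
      have hji : j ≠ i := fun he => hyne (by rw [he])
      exact Finset.inf_le (Finset.mem_erase.2 ⟨hji, Finset.mem_univ j⟩)
    have hsu : ∀ a ∈ s, CoUnif a := by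
      intro a ha
      obtain ⟨⟨i, rfl⟩, -⟩ := hmem_s.1 ha
      exact hcu i
    have hinfeq : Finset.univ.inf L = s.inf id := by
      apply le_antisymm
      · refine Finset.le_inf ?_
        intro y hy
        obtain ⟨⟨i, rfl⟩, -⟩ := hmem_s.1 hy
        exact Finset.inf_le (Finset.mem_univ i)
      · refine Finset.le_inf ?_
        intro i _
        by_cases hi : L i = ⊤
        · rw [hi]; exact le_top
        · exact Finset.inf_le (hmem_s.2 ⟨⟨i, rfl⟩, hi⟩)
    have hsm : ∀ c : Submodule S Mod, s.inf id ⊔ c = ⊤ → c = ⊤ := by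
      intro c hcc
      apply hker
      rwa [ker_pi_eq, hinfeq]
    have hbound : corank S Mod ≤ (s.card : ℕ∞) := by
      unfold corank
      refine sSup_le ?_
      rintro c ⟨k', rfl, L', hL'ne, hL'surj⟩
      have hF : CoIndepF L' := fun i => ⟨hL'ne i, (surj_pi_iff L').1 hL'surj i⟩
      obtain ⟨htco, htcard⟩ := coIndepF_toSet hF
      have hcle := coIndepSet_card_le hset hsu hsm htco
      rw [htcard] at hcle
      exact_mod_cast hcle
    exact lt_of_le_of_lt hbound (WithTop.coe_lt_top s.card)
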